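/- arXiv:2302.06351 — 2 statements merged into one kernel-verified Lean document; each statement's English description precedes it below -/
import Mathlib

section
/- Let G=(V,E,π) be a colored graph with equitable coloring π, and let D₁,…,D_t ⊆ V be the vertex sets corresponding to the weakly connected components of the quotient graph Q(G,π), where two color classes are joined in Q iff the bipartite graph between them is neither empty nor complete (i.e., is non-homogeneous). Then Aut(G,π) is isomorphic to the direct product ∏_{i=1}^t Aut((G,π)[D_i]) of the automorphism groups of the induced colored subgraphs, after exhaustively flipping homogeneously-complete connections between components to non-edges. -/
namespace Sassy

/-- A coloring is equitable if vertices of the same color have the same number of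
neighbors in every color class. -/
def Equitable {V C : Type*} (G : SimpleGraph V) (π : V → C) : Prop :=
  ∀ v w, π v = π w → ∀ c : C,
    {u | G.Adj v u ∧ π u = c}.ncard = {u | G.Adj w u ∧ π u = c}.ncard

/-- `φ` is a color-preserving automorphism of the colored graph `(G, π)`. -/
def IsAut {V C : Type*} (G : SimpleGraph V) (π : V → C) (φ : Equiv.Perm V) : Prop :=
  (∀ v w, G.Adj (φ v) (φ w) ↔ G.Adj v w) ∧ ∀ v, π (φ v) = π v

/-- The automorphism group of a colored graph, as a subgroup of `Equiv.Perm V`. -/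
def Aut {V C : Type*} (G : SimpleGraph V) (π : V → C) : Subgroup (Equiv.Perm V) where
  carrier := {φ | IsAut G π φ}
  one_mem' := ⟨fun _ _ => Iff.rfl, fun _ => rfl⟩
  mul_mem' := by
    rintro a b ⟨ha1, ha2⟩ ⟨hb1, hb2⟩
    refine ⟨fun v w => ?_, fun v => ?_⟩
    · simpa [Equiv.Perm.mul_apply] using (ha1 (b v) (b w)).trans (hb1 v w)
    · simp [Equiv.Perm.mul_apply, ha2, hb2]
  inv_mem' := by
    rintro a ⟨ha1, ha2⟩
    refine ⟨fun v w => ?_, fun v => ?_⟩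
    · conv_rhs => rw [← (show a (a⁻¹ v) = v from Equiv.apply_symm_apply a v), ← (show a (a⁻¹ w) = w from Equiv.apply_symm_apply a w)]
      exact (ha1 _ _).symm
    · conv_rhs => rw [← (show a (a⁻¹ v) = v from Equiv.apply_symm_apply a v)]
      exact (ha2 _).symm

end Sassy

/-- If D₁,…,D_t partition V into unions of color classes with no
edges between distinct parts (after flipping homogeneously-complete
connections to non-edges), then Aut(G,π) is isomorphic to the direct product
of the automorphism groups of the induced colored subgraphs, via restriction. -/
theorem stmt6 {V C : Type*} [Fintype V] (G : SimpleGraph V) (π : V → C)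
    (hequit : Sassy.Equitable G π) (t : ℕ) (D : Fin t → Set V)
    (hcover : ∀ v, ∃ i, v ∈ D i)
    (hdisj : ∀ i j, i ≠ j → Disjoint (D i) (D j))
    (hclasses : ∀ i, ∀ v w, π v = π w → (v ∈ D i ↔ w ∈ D i))
    (hcross : ∀ i j, i ≠ j → ∀ u ∈ D i, ∀ v ∈ D j, ¬ G.Adj u v) :
    ∃ e : ↥(Sassy.Aut G π) ≃*
        ((i : Fin t) → ↥(Sassy.Aut (G.induce (D i)) (fun v => π v.1))),
      ∀ (φ : ↥(Sassy.Aut G π)) (i : Fin t) (v : ↥(D i)),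
        ((e φ i).1 v).1 = φ.1 v.1 := by
  classical
  have hmem : ∀ v, v ∈ D (hcover v).choose := fun v => (hcover v).choose_spec
  set idx : V → Fin t := fun v => (hcover v).choose with hidx
  have huniq : ∀ v i, v ∈ D i → idx v = i := by
    intro v i hv
    by_contra h
    exact Set.disjoint_left.mp (hdisj _ _ h) (hmem v) hv
  -- invariance of the parts under automorphisms
  have hDinv : ∀ (φ : Equiv.Perm V), Sassy.IsAut G π φ → ∀ i v, v ∈ D i ↔ φ v ∈ D i := by
    intro φ hφ i v
    exact (hclasses i (φ v) v (hφ.2 v)).symm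
  -- forward map: restriction
  let F : ↥(Sassy.Aut G π) → ∀ i, ↥(Sassy.Aut (G.induce (D i)) (fun v => π v.1)) :=
    fun φ i => ⟨Equiv.Perm.subtypePerm φ.1 (fun v => (hDinv φ.1 φ.2 i v).symm),
      ⟨fun a b => φ.2.1 a.1 b.1, fun v => φ.2.2 v.1⟩⟩
  -- backward map: gluing
  let gfun : (∀ i, ↥(Sassy.Aut (G.induce (D i)) (fun v => π v.1))) → V → V :=
    fun ψ v => (((ψ (idx v)).1) ⟨v, hmem v⟩).1
  have gfun_apply : ∀ ψ i (v : V) (hv : v ∈ D i), gfun ψ v = (((ψ i).1) ⟨v, hv⟩).1 := by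
    intro ψ i v hv
    have h := huniq v i hv
    subst h
    rfl
  have gfun_mem : ∀ ψ i v (hv : v ∈ D i), gfun ψ v ∈ D i := by
    intro ψ i v hv
    rw [gfun_apply ψ i v hv]
    exact (((ψ i).1) ⟨v, hv⟩).2
  have gl : ∀ ψ v, gfun (fun i => (ψ i)⁻¹) (gfun ψ v) = v := by
    intro ψ v
    have h2 : gfun ψ v ∈ D (idx v) := gfun_mem ψ (idx v) v (hmem v)
    rw [gfun_apply (fun i => (ψ i)⁻¹) (idx v) (gfun ψ v) h2]
    have h3 : (⟨gfun ψ v, h2⟩ : ↥(D (idx v))) = (ψ (idx v)).1 ⟨v, hmem v⟩ :=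
      Subtype.ext (gfun_apply ψ (idx v) v (hmem v))
    rw [h3]
    simp
  let g : (∀ i, ↥(Sassy.Aut (G.induce (D i)) (fun v => π v.1))) → Equiv.Perm V :=
    fun ψ =>
    { toFun := gfun ψ
      invFun := gfun (fun i => (ψ i)⁻¹)
      left_inv := gl ψ
      right_inv := by
        intro v
        have := gl (fun i => (ψ i)⁻¹) v
        simpa using this }
  have gmem : ∀ ψ, g ψ ∈ Sassy.Aut G π := by
    intro ψ
    constructor
    · intro v w
      by_cases h : idx v = idx w
      · have hw : w ∈ D (idx v) := h ▸ hmem w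
        show G.Adj (gfun ψ v) (gfun ψ w) ↔ G.Adj v w
        rw [gfun_apply ψ (idx v) v (hmem v), gfun_apply ψ (idx v) w hw]
        exact (ψ (idx v)).2.1 ⟨v, hmem v⟩ ⟨w, hw⟩
      · show G.Adj (gfun ψ v) (gfun ψ w) ↔ G.Adj v w
        constructor
        · intro hadj
          exact absurd hadj (hcross _ _ h _ (gfun_mem ψ (idx v) v (hmem v))
            _ (gfun_mem ψ (idx w) w (hmem w)))
        · intro hadj
          exact absurd hadj (hcross _ _ h _ (hmem v) _ (hmem w))
    · intro v
      show π (gfun ψ v) = π v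
      rw [gfun_apply ψ (idx v) v (hmem v)]
      exact (ψ (idx v)).2.2 ⟨v, hmem v⟩
  let E : ↥(Sassy.Aut G π) ≃
      (∀ i, ↥(Sassy.Aut (G.induce (D i)) (fun v => π v.1))) :=
    { toFun := F
      invFun := fun ψ => ⟨g ψ, gmem ψ⟩
      left_inv := by
        intro φ
        apply Subtype.ext
        apply Equiv.ext
        intro v
        exact gfun_apply (F φ) (idx v) v (hmem v)
      right_inv := by
        intro ψ
        funext i
        apply Subtype.ext
        apply Equiv.ext
        intro v
        apply Subtype.ext
        show gfun ψ v.1 = ((ψ i).1 v).1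
        rw [gfun_apply ψ i v.1 v.2] }
  refine ⟨MulEquiv.mk' E ?_, fun φ i v => rfl⟩
  intro φ φ'
  funext i
  apply Subtype.ext
  apply Equiv.ext
  intro v
  rfl
end

section
/- Let G=(V,E,π) be an equitably colored graph and X, Y distinct color classes connected by |X|·|Y| pairwise internally-disjoint paths through degree-2 color classes C₁,…,C_t (an 'obfuscated edge flip'): every vertex of C_i has degree 2 with one neighbor in C_{i-1} and one in C_{i+1} (C₀=X, C_{t+1}=Y), and every x ∈ X has exactly |Y| neighbors in C₁ whose paths end in all distinct y ∈ Y. Let G' be obtained by deleting C₁,…,C_t (and the internal path edges). Then the restriction map Aut(G,π) → Aut(G',π|_{V'}) is a surjective group homomorphism: deleting all these paths is both symmetry preserving and symmetry lifting. -/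
namespace Sassy

/-- A path `(x, c₁, …, c_t, y)` through the color classes `c 0, c 1, …, c (t+1)`,
encoded as a function `w : Fin (t+2) → V`. -/
def IsUPath {V C : Type*} (G : SimpleGraph V) (π : V → C) (c : ℕ → C) (t : ℕ)
    (x : V) (w : Fin (t + 2) → V) : Prop :=
  w ⟨0, by omega⟩ = x ∧ (∀ i : Fin (t + 2), π (w i) = c i.1) ∧
    ∀ i : ℕ, (h : i + 1 < t + 2) → G.Adj (w ⟨i, by omega⟩) (w ⟨i + 1, h⟩)

end Sassy


namespace Sassy14

open scoped Classical

variable {V C : Type*} (G : SimpleGraph V) (π : V → C) (c : ℕ → C)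

noncomputable def stepUp (i : ℕ) (v : V) : V :=
  if h : ∃ u, G.Adj v u ∧ π u = c (i + 1) then h.choose else v

noncomputable def stepDown (i : ℕ) (v : V) : V :=
  if h : ∃ u, G.Adj v u ∧ π u = c (i - 1) then h.choose else v

noncomputable def upIter (i : ℕ) (v : V) : ℕ → V
  | 0 => v
  | k + 1 => stepUp G π c (i + k) (upIter i v k)

noncomputable def downIter (i : ℕ) (v : V) : ℕ → V
  | 0 => v
  | k + 1 => stepDown G π c (i - k) (downIter i v k)

noncomputable def pathThrough (t i : ℕ) (v : V) : Fin (t + 2) → V :=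
  fun j => if i ≤ j.1 then upIter G π c i v (j.1 - i) else downIter G π c i v (i - j.1)

variable {t : ℕ} [Fintype V]
variable (hinj : ∀ i j, i ≤ t + 1 → j ≤ t + 1 → c i = c j → i = j)
variable (hdeg2 : ∀ i, 1 ≤ i → i ≤ t → ∀ v, π v = c i →
      (G.neighborSet v).ncard = 2 ∧ (∃ u, G.Adj v u ∧ π u = c (i - 1)) ∧
        (∃ u, G.Adj v u ∧ π u = c (i + 1)))

include hinj hdeg2 in
lemma nbr_eq {i : ℕ} (hi1 : 1 ≤ i) (hi2 : i ≤ t) {v : V} (hv : π v = c i) :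
    ∃ d u, G.Adj v d ∧ π d = c (i - 1) ∧ G.Adj v u ∧ π u = c (i + 1) ∧
      G.neighborSet v = {d, u} := by
  obtain ⟨hn, ⟨d, hd1, hd2⟩, ⟨u, hu1, hu2⟩⟩ := hdeg2 i hi1 hi2 v hv
  have hdu : d ≠ u := by
    rintro rfl
    have := hinj (i - 1) (i + 1) (by omega) (by omega) (hd2.symm.trans hu2)
    omega
  have hsub : ({d, u} : Set V) ⊆ G.neighborSet v := by
    rintro z (rfl | rfl) <;> simpa [SimpleGraph.mem_neighborSet]
  have hcard : ({d, u} : Set V).ncard = 2 := Set.ncard_pair hdu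
  have heq := Set.eq_of_subset_of_ncard_le hsub (by rw [hn, hcard]) (Set.toFinite _)
  exact ⟨d, u, hd1, hd2, hu1, hu2, heq.symm⟩

include hinj hdeg2 in
lemma nbrUp_unique {i : ℕ} (hi1 : 1 ≤ i) (hi2 : i ≤ t) {v a b : V} (hv : π v = c i)
    (ha : G.Adj v a) (hb : G.Adj v b) (hca : π a = c (i + 1)) (hcb : π b = c (i + 1)) :
    a = b := by
  obtain ⟨d, u, hd1, hd2, hu1, hu2, hset⟩ := nbr_eq G π c hinj hdeg2 hi1 hi2 hv
  have hne : c (i - 1) ≠ c (i + 1) := fun h => by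
    have := hinj (i - 1) (i + 1) (by omega) (by omega) h; omega
  have hmem : ∀ z, G.Adj v z → π z = c (i + 1) → z = u := by
    intro z hz hcz
    have : z ∈ ({d, u} : Set V) := hset ▸ hz
    rcases this with rfl | rfl
    · exact absurd (hd2.symm.trans hcz) hne
    · rfl
  rw [hmem a ha hca, hmem b hb hcb]

include hinj hdeg2 in
lemma nbrDown_unique {i : ℕ} (hi1 : 1 ≤ i) (hi2 : i ≤ t) {v a b : V} (hv : π v = c i)
    (ha : G.Adj v a) (hb : G.Adj v b) (hca : π a = c (i - 1)) (hcb : π b = c (i - 1)) :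
    a = b := by
  obtain ⟨d, u, hd1, hd2, hu1, hu2, hset⟩ := nbr_eq G π c hinj hdeg2 hi1 hi2 hv
  have hne : c (i + 1) ≠ c (i - 1) := fun h => by
    have := hinj (i + 1) (i - 1) (by omega) (by omega) h; omega
  have hmem : ∀ z, G.Adj v z → π z = c (i - 1) → z = d := by
    intro z hz hcz
    have : z ∈ ({d, u} : Set V) := hset ▸ hz
    rcases this with rfl | rfl
    · rfl
    · exact absurd (hu2.symm.trans hcz) hne
  rw [hmem a ha hca, hmem b hb hcb]

include hdeg2 in
lemma upIter_spec {i : ℕ} (hi1 : 1 ≤ i) (hi2 : i ≤ t) {v : V} (hv : π v = c i) :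
    ∀ k, i + k ≤ t + 1 → π (upIter G π c i v k) = c (i + k) ∧
      (1 ≤ k → G.Adj (upIter G π c i v (k - 1)) (upIter G π c i v k)) := by
  intro k
  induction k with
  | zero => exact fun _ => ⟨hv, by omega⟩
  | succ k IH =>
    intro hk
    have IH' := IH (by omega)
    obtain ⟨-, -, z, hz1, hz2⟩ := hdeg2 (i + k) (by omega) (by omega) _ IH'.1
    have hex : ∃ u, G.Adj (upIter G π c i v k) u ∧ π u = c (i + k + 1) := ⟨z, hz1, hz2⟩
    have hstep : upIter G π c i v (k + 1) = hex.choose := by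
      show stepUp G π c (i + k) (upIter G π c i v k) = _
      rw [stepUp, dif_pos hex]
    refine ⟨?_, fun _ => ?_⟩
    · rw [hstep]; exact hex.choose_spec.2
    · rw [hstep]; exact hex.choose_spec.1

include hdeg2 in
lemma downIter_spec {i : ℕ} (hi1 : 1 ≤ i) (hi2 : i ≤ t) {v : V} (hv : π v = c i) :
    ∀ k, k ≤ i → π (downIter G π c i v k) = c (i - k) ∧
      (1 ≤ k → G.Adj (downIter G π c i v k) (downIter G π c i v (k - 1))) := by
  intro k
  induction k with
  | zero => exact fun _ => ⟨hv, by omega⟩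
  | succ k IH =>
    intro hk
    have IH' := IH (by omega)
    obtain ⟨-, ⟨z, hz1, hz2⟩, -⟩ := hdeg2 (i - k) (by omega) (by omega) _ IH'.1
    have hex : ∃ u, G.Adj (downIter G π c i v k) u ∧ π u = c (i - k - 1) := ⟨z, hz1, hz2⟩
    have hstep : downIter G π c i v (k + 1) = hex.choose := by
      show stepDown G π c (i - k) (downIter G π c i v k) = _
      rw [stepDown, dif_pos hex]
    refine ⟨?_, fun _ => ?_⟩
    · rw [hstep]; exact hex.choose_spec.2
    · rw [hstep]; exact hex.choose_spec.1.symm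

lemma pathThrough_def_le {i : ℕ} {v : V} {j : ℕ} (hj : j < t + 2) (h : j ≤ i) :
    pathThrough G π c t i v ⟨j, hj⟩ = downIter G π c i v (i - j) := by
  rcases eq_or_lt_of_le h with rfl | h'
  · simp [pathThrough, Nat.sub_self, upIter, downIter]
  · simp [pathThrough, Nat.not_le.2 h']

lemma pathThrough_def_ge {i : ℕ} {v : V} {j : ℕ} (hj : j < t + 2) (h : i ≤ j) :
    pathThrough G π c t i v ⟨j, hj⟩ = upIter G π c i v (j - i) := by
  simp [pathThrough, h]

include hdeg2 in
lemma pathThrough_spec {i : ℕ} (hi1 : 1 ≤ i) (hi2 : i ≤ t) {v : V} (hv : π v = c i) :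
    Sassy.IsUPath G π c t (pathThrough G π c t i v ⟨0, by omega⟩) (pathThrough G π c t i v) ∧
      pathThrough G π c t i v ⟨i, by omega⟩ = v := by
  have hup := upIter_spec G π c hdeg2 hi1 hi2 hv
  have hdn := downIter_spec G π c hdeg2 hi1 hi2 hv
  have hcol : ∀ j : Fin (t + 2), π (pathThrough G π c t i v j) = c j.1 := by
    intro j
    rcases le_or_gt i j.1 with h | h
    · rw [show j = (⟨j.1, j.2⟩ : Fin (t + 2)) from rfl, pathThrough_def_ge G π c j.2 h]
      have := (hup (j.1 - i) (by omega)).1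
      rwa [Nat.add_sub_cancel' h] at this
    · rw [show j = (⟨j.1, j.2⟩ : Fin (t + 2)) from rfl, pathThrough_def_le G π c j.2 h.le]
      have := (hdn (i - j.1) (by omega)).1
      rwa [show i - (i - j.1) = j.1 by omega] at this
  refine ⟨⟨rfl, hcol, ?_⟩, ?_⟩
  · intro j hj
    rcases le_or_gt i j with h | h
    · rw [pathThrough_def_ge G π c (by omega) h, pathThrough_def_ge G π c hj (by omega)]
      have := (hup (j + 1 - i) (by omega)).2 (by omega)
      rwa [show j + 1 - i - 1 = j - i by omega] at this
    · rw [pathThrough_def_le G π c (by omega) h.le, pathThrough_def_le G π c hj (by omega)]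
      have := (hdn (i - j) (by omega)).2 (by omega)
      rwa [show i - j - 1 = i - (j + 1) by omega] at this
  · rw [pathThrough_def_ge G π c (by omega) le_rfl, Nat.sub_self]
    rfl

include hinj hdeg2 in
lemma path_unique {x x' : V} {w w' : Fin (t + 2) → V}
    (hw : Sassy.IsUPath G π c t x w) (hw' : Sassy.IsUPath G π c t x' w')
    {i : ℕ} (hi1 : 1 ≤ i) (hi2 : i ≤ t)
    (hww : w ⟨i, by omega⟩ = w' ⟨i, by omega⟩) : w = w' := by
  obtain ⟨-, hwc, hwa⟩ := hw
  obtain ⟨-, hwc', hwa'⟩ := hw'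
  have hup : ∀ d (hd : i + d ≤ t + 1), w ⟨i + d, by omega⟩ = w' ⟨i + d, by omega⟩ := by
    intro d
    induction d with
    | zero => exact fun _ => hww
    | succ k IH =>
      intro hd
      have h1 := IH (by omega)
      have hv : π (w ⟨i + k, by omega⟩) = c (i + k) := hwc _
      refine nbrUp_unique G π c hinj hdeg2 (i := i + k) (by omega) (by omega) hv
        (hwa (i + k) (by omega)) ?_ (hwc ⟨i + k + 1, by omega⟩) (hwc' ⟨i + k + 1, by omega⟩)
      rw [h1]; exact hwa' (i + k) (by omega)
  have hdown : ∀ d, d ≤ i → w ⟨i - d, by omega⟩ = w' ⟨i - d, by omega⟩ := by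
    intro d
    induction d with
    | zero => exact fun _ => hww
    | succ k IH =>
      intro hd
      have h1 := IH (by omega)
      have hv : π (w ⟨i - k, by omega⟩) = c (i - k) := hwc _
      have he : (⟨i - (k + 1) + 1, by omega⟩ : Fin (t + 2)) = ⟨i - k, by omega⟩ := by
        apply Fin.ext; simp; omega
      have ha : G.Adj (w ⟨i - k, by omega⟩) (w ⟨i - (k + 1), by omega⟩) := by
        have := hwa (i - (k + 1)) (by omega)
        rw [he] at this
        exact this.symm
      have hb : G.Adj (w ⟨i - k, by omega⟩) (w' ⟨i - (k + 1), by omega⟩) := by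
        rw [h1]
        have := hwa' (i - (k + 1)) (by omega)
        rw [he] at this
        exact this.symm
      exact nbrDown_unique G π c hinj hdeg2 (i := i - k) (by omega) (by omega) hv ha hb
        (hwc ⟨i - (k + 1), by omega⟩) (hwc' ⟨i - (k + 1), by omega⟩)
  funext j
  rcases le_or_gt i j.1 with h | h
  · have := hup (j.1 - i) (by omega)
    have he : (⟨i + (j.1 - i), by omega⟩ : Fin (t + 2)) = j := by apply Fin.ext; simp; omega
    rwa [he] at this
  · have := hdown (i - j.1) (by omega)
    have he : (⟨i - (i - j.1), by omega⟩ : Fin (t + 2)) = j := by apply Fin.ext; simp; omega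
    rwa [he] at this

end Sassy14

open Sassy14

/-- Obfuscated edge flip: if the distinct color classes X = c 0 and
Y = c (t+1) are connected by exactly one internally degree-2 path through
C₁,…,C_t for every pair (x,y) ∈ X × Y, then deleting C₁,…,C_t is symmetry
preserving and symmetry lifting: restriction is a surjective homomorphism
from Aut(G,π) onto the automorphism group of the reduced graph. -/
theorem stmt14 {V C : Type*} [Fintype V] (G : SimpleGraph V) (π : V → C)
    (hequit : Sassy.Equitable G π) (t : ℕ) (c : ℕ → C)
    (hinj : ∀ i j, i ≤ t + 1 → j ≤ t + 1 → c i = c j → i = j)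
    (hdeg2 : ∀ i, 1 ≤ i → i ≤ t → ∀ v, π v = c i →
      (G.neighborSet v).ncard = 2 ∧ (∃ u, G.Adj v u ∧ π u = c (i - 1)) ∧
        (∃ u, G.Adj v u ∧ π u = c (i + 1)))
    (hpaths : ∀ x y, π x = c 0 → π y = c (t + 1) →
      ∃! w : Fin (t + 2) → V,
        Sassy.IsUPath G π c t x w ∧ w (Fin.last (t + 1)) = y) :
    ∃ p : ↥(Sassy.Aut G π) →*
        ↥(Sassy.Aut (G.induce {v : V | ∀ i, 1 ≤ i → i ≤ t → π v ≠ c i})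
          (fun v => π v.1)),
      (∀ (φ : ↥(Sassy.Aut G π)) (v : ↥{v : V | ∀ i, 1 ≤ i → i ≤ t → π v ≠ c i}),
        ((p φ).1 v).1 = φ.1 v.1) ∧
      Function.Surjective p := by
  classical
  let S : Set V := {v : V | ∀ i, 1 ≤ i → i ≤ t → π v ≠ c i}
  have hc0S : ∀ v : V, π v = c 0 → v ∈ S := by
    intro v hv i hi1 hi2 hvc
    have := hinj 0 i (by omega) (by omega) (hv.symm.trans hvc)
    omega
  have hclS : ∀ v : V, π v = c (t + 1) → v ∈ S := by
    intro v hv i hi1 hi2 hvc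
    have := hinj (t + 1) i (by omega) (by omega) (hv.symm.trans hvc)
    omega
  have hintS : ∀ (v : V) (i : ℕ), 1 ≤ i → i ≤ t → π v = c i → v ∉ S := by
    intro v i hi1 hi2 hvc hv
    exact hv i hi1 hi2 hvc
  have hex : ∀ v : V, v ∉ S → ∃ i, 1 ≤ i ∧ i ≤ t ∧ π v = c i := by
    intro v hv
    have hv' : ¬ ∀ i, 1 ≤ i → i ≤ t → π v ≠ c i := hv
    push_neg at hv'
    exact hv'
  choose lvl hlvl1 hlvl2 hlvl3 using hex
  have hlvlu : ∀ (v : V) (h : v ∉ S) (i : ℕ), 1 ≤ i → i ≤ t → π v = c i → lvl v h = i := by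
    intro v h i hi1 hi2 hvc
    exact hinj _ _ (by have := hlvl2 v h; omega) (by omega) ((hlvl3 v h).symm.trans hvc)
  obtain ⟨P, hP1, hP2⟩ :
      ∃ P : V → V → Fin (t + 2) → V,
        (∀ a b, π a = c 0 → π b = c (t + 1) →
          Sassy.IsUPath G π c t a (P a b) ∧ P a b (Fin.last (t + 1)) = b) ∧
        (∀ a b, π a = c 0 → π b = c (t + 1) → ∀ w,
          Sassy.IsUPath G π c t a w ∧ w (Fin.last (t + 1)) = b → w = P a b) := by
    refine ⟨fun a b =>
      if h : ∃! w : Fin (t + 2) → V,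
          Sassy.IsUPath G π c t a w ∧ w (Fin.last (t + 1)) = b
        then h.choose else fun _ => a, ?_, ?_⟩
    · intro a b ha hb
      simp only [dif_pos (hpaths a b ha hb)]
      exact (hpaths a b ha hb).choose_spec.1
    · intro a b ha hb w hw
      simp only [dif_pos (hpaths a b ha hb)]
      exact (hpaths a b ha hb).choose_spec.2 w hw
  have hpt : ∀ (v : V) (h : v ∉ S),
      Sassy.IsUPath G π c t (pathThrough G π c t (lvl v h) v ⟨0, by omega⟩)
        (pathThrough G π c t (lvl v h) v) ∧
      pathThrough G π c t (lvl v h) v ⟨lvl v h, by have := hlvl2 v h; omega⟩ = v :=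
    fun v h => pathThrough_spec G π c hdeg2 (hlvl1 v h) (hlvl2 v h) (hlvl3 v h)
  have hXc : ∀ (v : V) (h : v ∉ S),
      π (pathThrough G π c t (lvl v h) v ⟨0, by omega⟩) = c 0 :=
    fun v h => (hpt v h).1.2.1 ⟨0, by omega⟩
  have hYc : ∀ (v : V) (h : v ∉ S),
      π (pathThrough G π c t (lvl v h) v (Fin.last (t + 1))) = c (t + 1) :=
    fun v h => (hpt v h).1.2.1 (Fin.last (t + 1))
  have hXS : ∀ (v : V) (h : v ∉ S),
      pathThrough G π c t (lvl v h) v ⟨0, by omega⟩ ∈ S :=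
    fun v h => hc0S _ (hXc v h)
  have hYS : ∀ (v : V) (h : v ∉ S),
      pathThrough G π c t (lvl v h) v (Fin.last (t + 1)) ∈ S :=
    fun v h => hclS _ (hYc v h)
  have hPv : ∀ (v : V) (h : v ∉ S),
      P (pathThrough G π c t (lvl v h) v ⟨0, by omega⟩)
        (pathThrough G π c t (lvl v h) v (Fin.last (t + 1))) =
        pathThrough G π c t (lvl v h) v :=
    fun v h => (hP2 _ _ (hXc v h) (hYc v h) _ ⟨(hpt v h).1, rfl⟩).symm
  have hcover : ∀ (x : V) (w : Fin (t + 2) → V), Sassy.IsUPath G π c t x w →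
      ∀ (j : ℕ) (hj1 : 1 ≤ j) (hjt : j ≤ t) (hjlt : j < t + 2) (h : w ⟨j, hjlt⟩ ∉ S),
        pathThrough G π c t (lvl (w ⟨j, hjlt⟩) h) (w ⟨j, hjlt⟩) = w := by
    intro x w hw j hj1 hjt hjlt h
    have hl : lvl _ h = j := hlvlu _ h j hj1 hjt (hw.2.1 ⟨j, hjlt⟩)
    have hspec := pathThrough_spec G π c hdeg2 (hlvl1 _ h) (hlvl2 _ h) (hlvl3 _ h)
    refine path_unique G π c hinj hdeg2 hspec.1 hw (i := j) hj1 hjt ?_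
    have h2 := hspec.2
    simp only [hl] at h2 ⊢
    exact h2
  obtain ⟨f, hfS, hfN⟩ :
      ∃ f : Equiv.Perm S → V → V,
        (∀ (ψ : Equiv.Perm S) (v : V) (h : v ∈ S), f ψ v = (ψ ⟨v, h⟩).1) ∧
        (∀ (ψ : Equiv.Perm S) (v : V) (h : v ∉ S), f ψ v =
          P (ψ ⟨_, hXS v h⟩).1 (ψ ⟨_, hYS v h⟩).1
            ⟨lvl v h, by have := hlvl2 v h; omega⟩) :=
    ⟨fun ψ v => if h : v ∈ S then (ψ ⟨v, h⟩).1
      else P (ψ ⟨_, hXS v h⟩).1 (ψ ⟨_, hYS v h⟩).1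
        ⟨lvl v h, by have := hlvl2 v h; omega⟩,
      fun ψ v h => dif_pos h, fun ψ v h => dif_neg h⟩
  have hkey : ∀ (ψ : Equiv.Perm S), (∀ s : S, π (ψ s).1 = π s.1) →
      ∀ (a b : V) (ha : π a = c 0) (hb : π b = c (t + 1)) (j : ℕ) (hj : j < t + 2),
        f ψ (P a b ⟨j, hj⟩) =
          P (ψ ⟨a, hc0S a ha⟩).1 (ψ ⟨b, hclS b hb⟩).1 ⟨j, hj⟩ := by
    intro ψ hψc a b ha hb j hj
    have hQ := hP1 a b ha hb
    have haa : π (ψ ⟨a, hc0S a ha⟩).1 = c 0 := (hψc _).trans ha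
    have hbb : π (ψ ⟨b, hclS b hb⟩).1 = c (t + 1) := (hψc _).trans hb
    have hQ' := hP1 _ _ haa hbb
    by_cases hj0 : j = 0
    · subst hj0
      have e0 : P a b ⟨0, hj⟩ = a := hQ.1.1
      rw [e0, hfS ψ a (hc0S a ha)]
      exact hQ'.1.1.symm
    by_cases hjlast : j = t + 1
    · subst hjlast
      have e0 : P a b ⟨t + 1, hj⟩ = b := hQ.2
      rw [e0, hfS ψ b (hclS b hb)]
      exact hQ'.2.symm
    · have hj1 : 1 ≤ j := by omega
      have hjt' : j ≤ t := by omega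
      have huc : π (P a b ⟨j, hj⟩) = c j := hQ.1.2.1 ⟨j, hj⟩
      have huS : P a b ⟨j, hj⟩ ∉ S := hintS _ j hj1 hjt' huc
      rw [hfN ψ _ huS]
      have hcv := hcover a (P a b) hQ.1 j hj1 hjt' hj huS
      have e1 : pathThrough G π c t (lvl _ huS) (P a b ⟨j, hj⟩) ⟨0, by omega⟩ = a :=
        (congrFun hcv ⟨0, by omega⟩).trans hQ.1.1
      have e2 : pathThrough G π c t (lvl _ huS) (P a b ⟨j, hj⟩) (Fin.last (t + 1)) = b :=
        (congrFun hcv (Fin.last (t + 1))).trans hQ.2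
      have e3 : lvl _ huS = j := hlvlu _ huS j hj1 hjt' huc
      simp only [e1, e2]
      simp only [e3]
  have hfc : ∀ (ψ : Equiv.Perm S), (∀ s : S, π (ψ s).1 = π s.1) →
      ∀ v, π (f ψ v) = π v := by
    intro ψ hψc v
    by_cases h : v ∈ S
    · rw [hfS ψ v h]; exact hψc _
    · rw [hfN ψ v h]
      have haa : π (ψ ⟨_, hXS v h⟩).1 = c 0 := (hψc _).trans (hXc v h)
      have hbb : π (ψ ⟨_, hYS v h⟩).1 = c (t + 1) := (hψc _).trans (hYc v h)
      have hcol := (hP1 _ _ haa hbb).1.2.1 ⟨lvl v h, by have := hlvl2 v h; omega⟩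
      rw [hcol]
      exact (hlvl3 v h).symm
  have hnbr : ∀ (v : V) (h : v ∉ S) (w : V), G.Adj v w →
      w = pathThrough G π c t (lvl v h) v ⟨lvl v h - 1, by have := hlvl2 v h; omega⟩ ∨
      w = pathThrough G π c t (lvl v h) v ⟨lvl v h + 1, by have := hlvl2 v h; omega⟩ := by
    intro v h w hadj
    have hil := hlvl1 v h
    have hiu := hlvl2 v h
    have hvc := hlvl3 v h
    obtain ⟨d, u, hd1, hd2, hu1, hu2, hset⟩ :=
      nbr_eq G π c hinj hdeg2 hil hiu hvc
    have hW := hpt v h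
    have hWi : pathThrough G π c t (lvl v h) v ⟨lvl v h, by omega⟩ = v := hW.2
    have hd'c : π (pathThrough G π c t (lvl v h) v ⟨lvl v h - 1, by omega⟩) =
        c (lvl v h - 1) := hW.1.2.1 ⟨lvl v h - 1, by omega⟩
    have hu'c : π (pathThrough G π c t (lvl v h) v ⟨lvl v h + 1, by omega⟩) =
        c (lvl v h + 1) := hW.1.2.1 ⟨lvl v h + 1, by omega⟩
    have hd'a : G.Adj v (pathThrough G π c t (lvl v h) v ⟨lvl v h - 1, by omega⟩) := by
      have hh := hW.1.2.2 (lvl v h - 1) (by omega)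
      have he : (⟨lvl v h - 1 + 1, by omega⟩ : Fin (t + 2)) = ⟨lvl v h, by omega⟩ := by
        apply Fin.ext; simp; omega
      rw [he, hWi] at hh
      exact hh.symm
    have hu'a : G.Adj v (pathThrough G π c t (lvl v h) v ⟨lvl v h + 1, by omega⟩) := by
      have hh := hW.1.2.2 (lvl v h) (by omega)
      rw [hWi] at hh
      exact hh
    have hwmem : w ∈ ({d, u} : Set V) := by
      rw [← hset]
      exact hadj
    simp only [Set.mem_insert_iff, Set.mem_singleton_iff] at hwmem
    rcases hwmem with rfl | rfl
    · left
      exact nbrDown_unique G π c hinj hdeg2 hil hiu hvc hadj hd'a hd2 hd'c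
    · right
      exact nbrUp_unique G π c hinj hdeg2 hil hiu hvc hadj hu'a hu2 hu'c
  have hfa : ∀ (ψ : Equiv.Perm S), (∀ s : S, π (ψ s).1 = π s.1) →
      (∀ a b : S, (G.induce S).Adj (ψ a) (ψ b) ↔ (G.induce S).Adj a b) →
      ∀ v w, G.Adj v w → G.Adj (f ψ v) (f ψ w) := by
    intro ψ hψc hψa
    have main : ∀ v w, v ∉ S → G.Adj v w → G.Adj (f ψ v) (f ψ w) := by
      intro v w h hadj
      have hil := hlvl1 v h
      have hiu := hlvl2 v h
      have haa : π (ψ ⟨_, hXS v h⟩).1 = c 0 := (hψc _).trans (hXc v h)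
      have hbb : π (ψ ⟨_, hYS v h⟩).1 = c (t + 1) := (hψc _).trans (hYc v h)
      have hQ' := hP1 _ _ haa hbb
      have hfv : f ψ v = P (ψ ⟨_, hXS v h⟩).1 (ψ ⟨_, hYS v h⟩).1
          ⟨lvl v h, by omega⟩ := hfN ψ v h
      have hWQ : ∀ (j : ℕ) (hj : j < t + 2),
          f ψ (pathThrough G π c t (lvl v h) v ⟨j, hj⟩) =
            P (ψ ⟨_, hXS v h⟩).1 (ψ ⟨_, hYS v h⟩).1 ⟨j, hj⟩ := by
        intro j hj
        have hk := hkey ψ hψc _ _ (hXc v h) (hYc v h) j hj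
        rw [hPv v h] at hk
        exact hk
      rcases hnbr v h w hadj with rfl | rfl
      · rw [hfv, hWQ (lvl v h - 1) (by omega)]
        have hh := hQ'.1.2.2 (lvl v h - 1) (by omega)
        have he : (⟨lvl v h - 1 + 1, by omega⟩ : Fin (t + 2)) = ⟨lvl v h, by omega⟩ := by
          apply Fin.ext; simp; omega
        rw [he] at hh
        exact hh.symm
      · rw [hfv, hWQ (lvl v h + 1) (by omega)]
        exact hQ'.1.2.2 (lvl v h) (by omega)
    intro v w hadj
    by_cases hv : v ∈ S
    · by_cases hw : w ∈ S
      · rw [hfS ψ v hv, hfS ψ w hw]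
        exact (hψa ⟨v, hv⟩ ⟨w, hw⟩).2 hadj
      · exact (main w v hw hadj.symm).symm
    · exact main v w hv hadj
  have hinvf : ∀ (ψ ψ' : Equiv.Perm S), (∀ s : S, π (ψ s).1 = π s.1) →
      (∀ s : S, π (ψ' s).1 = π s.1) → (∀ s : S, ψ' (ψ s) = s) →
      ∀ v, f ψ' (f ψ v) = v := by
    intro ψ ψ' hψc hψ'c hinv v
    by_cases h : v ∈ S
    · rw [hfS ψ v h]
      have hm : (ψ ⟨v, h⟩).1 ∈ S := (ψ ⟨v, h⟩).2
      rw [hfS ψ' _ hm]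
      have he : (⟨(ψ ⟨v, h⟩).1, hm⟩ : S) = ψ ⟨v, h⟩ := rfl
      rw [he, hinv]
    · have haa : π (ψ ⟨_, hXS v h⟩).1 = c 0 := (hψc _).trans (hXc v h)
      have hbb : π (ψ ⟨_, hYS v h⟩).1 = c (t + 1) := (hψc _).trans (hYc v h)
      rw [hfN ψ v h]
      have hk := hkey ψ' hψ'c _ _ haa hbb (lvl v h) (by have := hlvl2 v h; omega)
      rw [hk]
      have e1 : (⟨(ψ ⟨_, hXS v h⟩).1, hc0S _ haa⟩ : S) = ψ ⟨_, hXS v h⟩ := rfl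
      have e2 : (⟨(ψ ⟨_, hYS v h⟩).1, hclS _ hbb⟩ : S) = ψ ⟨_, hYS v h⟩ := rfl
      rw [e1, e2, hinv, hinv]
      exact (congrFun (hPv v h) ⟨lvl v h, by have := hlvl2 v h; omega⟩).trans ((hpt v h).2)
  have hmap : ∀ (φ : Equiv.Perm V), Sassy.IsAut G π φ → ∀ v : V, v ∈ S → φ v ∈ S := by
    intro φ hφ v hv i hi1 hi2 hc
    exact hv i hi1 hi2 ((hφ.2 v).symm.trans hc)
  have hAutmem : ∀ φ : ↥(Sassy.Aut G π), Sassy.IsAut G π φ.1 := fun φ => φ.2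
  have hAutmeminv : ∀ φ : ↥(Sassy.Aut G π), Sassy.IsAut G π φ.1⁻¹ := fun φ => (φ⁻¹).2
  let r : ↥(Sassy.Aut G π) → Equiv.Perm S := fun φ =>
    { toFun := fun s => ⟨φ.1 s.1, hmap φ.1 (hAutmem φ) s.1 s.2⟩
      invFun := fun s => ⟨φ.1⁻¹ s.1, hmap φ.1⁻¹ (hAutmeminv φ) s.1 s.2⟩
      left_inv := fun s => Subtype.ext (Equiv.symm_apply_apply _ _)
      right_inv := fun s => Subtype.ext (Equiv.apply_symm_apply _ _) }
  have hrAut : ∀ φ : ↥(Sassy.Aut G π),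
      Sassy.IsAut (G.induce S) (fun v => π v.1) (r φ) := by
    intro φ
    exact ⟨fun a b => (hAutmem φ).1 a.1 b.1, fun a => (hAutmem φ).2 a.1⟩
  refine ⟨{ toFun := fun φ => ⟨r φ, hrAut φ⟩
            map_one' := Subtype.ext (Equiv.ext fun s => Subtype.ext rfl)
            map_mul' := fun φ χ => Subtype.ext (Equiv.ext fun s => Subtype.ext rfl) },
    fun φ v => rfl, ?_⟩
  rintro ⟨ψ, hψmem⟩
  have hψ : Sassy.IsAut (G.induce S) (fun v => π v.1) ψ := hψmem
  have hψc : ∀ s : S, π (ψ s).1 = π s.1 := hψ.2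
  have hψ'c : ∀ s : S, π (ψ⁻¹ s).1 = π s.1 := by
    intro s
    conv_rhs => rw [← (show ψ (ψ⁻¹ s) = s from Equiv.apply_symm_apply ψ s)]
    exact (hψc _).symm
  have hinv1 : ∀ s : S, ψ⁻¹ (ψ s) = s := fun s => Equiv.symm_apply_apply ψ s
  have hinv2 : ∀ s : S, ψ (ψ⁻¹ s) = s := fun s => Equiv.apply_symm_apply ψ s
  have hadj' : ∀ a b : S, (G.induce S).Adj (ψ⁻¹ a) (ψ⁻¹ b) ↔ (G.induce S).Adj a b := by
    intro a b
    conv_rhs => rw [← hinv2 a, ← hinv2 b]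
    exact (hψ.1 _ _).symm
  have hL : ∀ v, f ψ⁻¹ (f ψ v) = v := hinvf ψ ψ⁻¹ hψc hψ'c hinv1
  have hR : ∀ v, f ψ (f ψ⁻¹ v) = v := hinvf ψ⁻¹ ψ hψ'c hψc hinv2
  have hadjΦ : ∀ v w, G.Adj (f ψ v) (f ψ w) ↔ G.Adj v w := by
    intro v w
    constructor
    · intro hadj
      have hh := hfa ψ⁻¹ hψ'c hadj' _ _ hadj
      rwa [hL, hL] at hh
    · exact hfa ψ hψc hψ.1 v w
  refine ⟨⟨⟨f ψ, f ψ⁻¹, hL, hR⟩, hadjΦ, hfc ψ hψc⟩, ?_⟩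
  apply Subtype.ext
  apply Equiv.ext
  intro s
  apply Subtype.ext
  show f ψ s.1 = (ψ s).1
  rw [hfS ψ s.1 s.2]
end
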